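/- In type D_4 (Δ = {±e_i±e_j : i≠j} ⊆ ℝ⁴, |Δ| = 24), let λ = φ_1 + φ_3 = e_1 − e_4 + φ_4 where φ_4 = (1/2)(e_1+e_2+e_3+e_4), Λ = Wλ (so |Λ| = 2^{r−1}·r = 32), and H = {x ∈ ℝ⁴ : x₁+x₂+x₃+x₄ = 0}. Then |Δ ∩ H| = 12, |Λ ∩ H| = 8, and |Λ \ H| = 24 > |Δ \ H| + 6. -/

import Mathlib

set_option maxRecDepth 10000

open Set

noncomputable section

/-- The `i`-th standard basis vector of ℝ^r. -/
def eV (r : ℕ) (i : Fin r) : EuclideanSpace ℝ (Fin r) := EuclideanSpace.single i 1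

/-- The root system of type D_r: Δ = {±e_i ± e_j : i ≠ j}. -/
def rootsD (r : ℕ) : Set (EuclideanSpace ℝ (Fin r)) :=
  {v | ∃ i j, i ≠ j ∧ ∃ s t : ℝ, (s = 1 ∨ s = -1) ∧ (t = 1 ∨ t = -1) ∧
      v = s • eV r i + t • eV r j}

/-- The orbit of a vector of ℝ^r under the group of permutations combined with
even sign changes of the coordinates (the Weyl group of type D_r). -/
def evenSignedPermOrbit (r : ℕ) (v : EuclideanSpace ℝ (Fin r)) :
    Set (EuclideanSpace ℝ (Fin r)) :=
  {y | ∃ (σ : Equiv.Perm (Fin r)) (ε : Fin r → ℝ),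
    (∀ i, ε i = 1 ∨ ε i = -1) ∧ (∏ i, ε i) = 1 ∧ ∀ i, y i = ε i * v (σ i)}

/-- λ = φ₁ + φ₃ = (3/2, 1/2, 1/2, −1/2) in type D₄. -/
def lamD4 : EuclideanSpace ℝ (Fin 4) :=
  WithLp.toLp 2 (![3 / 2, 1 / 2, 1 / 2, -(1 / 2)] : Fin 4 → ℝ)

/-- Λ = Wλ in type D₄, a set of 32 vectors. -/
def LamD4 : Set (EuclideanSpace ℝ (Fin 4)) := evenSignedPermOrbit 4 lamD4

/-- The hyperplane H = {x ∈ ℝ⁴ : x₁ + x₂ + x₃ + x₄ = 0}. -/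
def HD4 : Set (EuclideanSpace ℝ (Fin 4)) := {x | x 0 + x 1 + x 2 + x 3 = 0}

/-! ### Auxiliary machinery -/

/-- Sign of a boolean, as an integer. -/
def sg (b : Bool) : ℤ := if b then 1 else -1

lemma sg_eq (b : Bool) : sg b = 1 ∨ sg b = -1 := by cases b <;> simp [sg]

/-- 2·λ, with integer coordinates. -/
def lam2 : Fin 4 → ℤ := ![3, 1, 1, -1]

lemma lamD4_eq (j : Fin 4) : lamD4 j = (lam2 j : ℝ) / 2 := by
  fin_cases j <;> simp [lamD4, lam2] <;> norm_num

/-- Halved cast of an integer vector into ℝ⁴. -/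
def c2 (q : Fin 4 → ℤ) : EuclideanSpace ℝ (Fin 4) := WithLp.toLp 2 (fun i => (q i : ℝ) / 2)

lemma c2_injective : Function.Injective c2 := by
  intro a b h
  funext i
  have h1 : ((a i : ℝ)) / 2 = ((b i : ℝ)) / 2 := congrArg (fun v : EuclideanSpace ℝ (Fin 4) => v i) h
  have h2 : ((a i : ℝ)) = (b i : ℝ) := by linarith
  exact_mod_cast h2

/-- Finset of integer vectors: 2·Λ. -/
def FL : Finset (Fin 4 → ℤ) :=
  Finset.image (fun p : Equiv.Perm (Fin 4) × (Fin 4 → Bool) =>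
      fun i => sg (p.2 i) * lam2 (p.1 i))
    (Finset.univ.filter fun p => (∏ i, sg (p.2 i)) = 1)

/-- Finset of integer vectors: 2·Δ. -/
def FR : Finset (Fin 4 → ℤ) :=
  Finset.image (fun p : Fin 4 × Fin 4 × Bool × Bool =>
      fun k => sg p.2.2.1 * (if k = p.1 then 2 else 0) +
        sg p.2.2.2 * (if k = p.2.1 then 2 else 0))
    (Finset.univ.filter fun p => p.1 ≠ p.2.1)

lemma memH_iff (q : Fin 4 → ℤ) : c2 q ∈ HD4 ↔ q 0 + q 1 + q 2 + q 3 = 0 := by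
  simp only [HD4, c2, PiLp.toLp_apply, Set.mem_setOf_eq]
  constructor
  · intro h
    have : ((q 0 + q 1 + q 2 + q 3 : ℤ) : ℝ) = 0 := by push_cast; linarith
    exact_mod_cast this
  · intro h
    have : ((q 0 + q 1 + q 2 + q 3 : ℤ) : ℝ) = 0 := by exact_mod_cast h
    push_cast at this
    linarith

lemma interH_eq (F : Finset (Fin 4 → ℤ)) :
    (c2 '' ↑F) ∩ HD4 = c2 '' ↑(F.filter fun q => q 0 + q 1 + q 2 + q 3 = 0) := by
  ext x
  simp only [Set.mem_inter_iff, Set.mem_image, Finset.mem_coe, Finset.mem_filter]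
  constructor
  · rintro ⟨⟨q, hq, rfl⟩, hx⟩
    exact ⟨q, ⟨hq, (memH_iff q).mp hx⟩, rfl⟩
  · rintro ⟨q, ⟨hq, h0⟩, rfl⟩
    exact ⟨⟨q, hq, rfl⟩, (memH_iff q).mpr h0⟩

lemma diffH_eq (F : Finset (Fin 4 → ℤ)) :
    (c2 '' ↑F) \ HD4 = c2 '' ↑(F.filter fun q => ¬(q 0 + q 1 + q 2 + q 3 = 0)) := by
  ext x
  simp only [Set.mem_diff, Set.mem_image, Finset.mem_coe, Finset.mem_filter]
  constructor
  · rintro ⟨⟨q, hq, rfl⟩, hx⟩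
    exact ⟨q, ⟨hq, fun h0 => hx ((memH_iff q).mpr h0)⟩, rfl⟩
  · rintro ⟨q, ⟨hq, h0⟩, rfl⟩
    exact ⟨⟨q, hq, rfl⟩, fun hx => h0 ((memH_iff q).mp hx)⟩

lemma ncard_c2 (F : Finset (Fin 4 → ℤ)) : (c2 '' ↑F).ncard = F.card := by
  rw [Set.ncard_image_of_injective _ c2_injective, Set.ncard_coe_finset]

lemma c2_root (i j : Fin 4) (sb tb : Bool) :
    c2 (fun k => sg sb * (if k = i then 2 else 0) + sg tb * (if k = j then 2 else 0))
      = (sg sb : ℝ) • eV 4 i + (sg tb : ℝ) • eV 4 j := by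
  ext k
  simp only [c2, PiLp.toLp_apply, PiLp.add_apply, PiLp.smul_apply, eV, EuclideanSpace.single_apply,
    smul_eq_mul]
  split_ifs <;> push_cast <;> ring

lemma memFR (i j : Fin 4) (hij : i ≠ j) (sb tb : Bool) :
    (fun k => sg sb * (if k = i then 2 else 0) + sg tb * (if k = j then 2 else 0)) ∈ FR := by
  simp only [FR, Finset.mem_image, Finset.mem_filter, Finset.mem_univ, true_and]
  exact ⟨⟨i, j, sb, tb⟩, hij, rfl⟩

/-- Δ is the halved cast of FR. -/
lemma rootsD_eq : rootsD 4 = c2 '' ↑FR := by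
  ext x
  constructor
  · rintro ⟨i, j, hij, s, t, hs, ht, rfl⟩
    rcases hs with rfl | rfl <;> rcases ht with rfl | rfl
    · exact ⟨_, memFR i j hij true true, by rw [c2_root]; norm_num [sg]⟩
    · exact ⟨_, memFR i j hij true false, by rw [c2_root]; norm_num [sg]⟩
    · exact ⟨_, memFR i j hij false true, by rw [c2_root]; norm_num [sg]⟩
    · exact ⟨_, memFR i j hij false false, by rw [c2_root]; norm_num [sg]⟩
  · rintro ⟨q, hq, rfl⟩
    simp only [FR, Finset.mem_coe, Finset.mem_image, Finset.mem_filter, Finset.mem_univ,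
      true_and] at hq
    obtain ⟨⟨i, j, sb, tb⟩, hij, rfl⟩ := hq
    refine ⟨i, j, hij, (sg sb : ℝ), (sg tb : ℝ), ?_, ?_, ?_⟩
    · rcases sg_eq sb with h | h <;> rw [h] <;> norm_num
    · rcases sg_eq tb with h | h <;> rw [h] <;> norm_num
    · exact c2_root i j sb tb

/-- Λ is the halved cast of FL. -/
lemma LamD4_eq : LamD4 = c2 '' ↑FL := by
  classical
  ext x
  constructor
  · rintro ⟨σ, ε, hε, hprod, hx⟩
    set b : Fin 4 → Bool := fun i => if ε i = 1 then true else false with hb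
    have hsg : ∀ i, (sg (b i) : ℝ) = ε i := by
      intro i
      rcases hε i with h | h <;> norm_num [hb, sg, h]
    refine ⟨fun i => sg (b i) * lam2 (σ i), ?_, ?_⟩
    · simp only [FL, Finset.mem_coe, Finset.mem_image, Finset.mem_filter, Finset.mem_univ,
        true_and]
      refine ⟨⟨σ, b⟩, ?_, rfl⟩
      have : ((∏ i, sg (b i) : ℤ) : ℝ) = 1 := by
        push_cast
        rw [Finset.prod_congr rfl fun i _ => hsg i]
        exact hprod
      exact_mod_cast this
    · ext i
      simp only [c2, PiLp.toLp_apply]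
      push_cast
      rw [hsg i, hx i, lamD4_eq (σ i)]
      ring
  · rintro ⟨q, hq, rfl⟩
    simp only [FL, Finset.mem_coe, Finset.mem_image, Finset.mem_filter, Finset.mem_univ,
      true_and] at hq
    obtain ⟨⟨σ, b⟩, hprod, rfl⟩ := hq
    refine ⟨σ, fun i => (sg (b i) : ℝ), fun i => ?_, ?_, fun i => ?_⟩
    · rcases sg_eq (b i) with h | h <;> simp [h]
    · have : ((∏ i, sg (b i) : ℤ) : ℝ) = 1 := by exact_mod_cast hprod
      push_cast at this
      exact this
    · simp only [c2, PiLp.toLp_apply]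
      push_cast
      rw [lamD4_eq (σ i)]
      ring

lemma cardFL : FL.card = 32 := by decide
lemma cardFL0 : (FL.filter fun q => q 0 + q 1 + q 2 + q 3 = 0).card = 8 := by decide
lemma cardFL1 : (FL.filter fun q => ¬(q 0 + q 1 + q 2 + q 3 = 0)).card = 24 := by decide
lemma cardFR0 : (FR.filter fun q => q 0 + q 1 + q 2 + q 3 = 0).card = 12 := by decide
lemma cardFR1 : (FR.filter fun q => ¬(q 0 + q 1 + q 2 + q 3 = 0)).card = 12 := by decide

/-- in type D₄ with λ = φ₁ + φ₃ and H = {x₁+x₂+x₃+x₄ = 0}: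
|Δ ∩ H| = 12, |Λ ∩ H| = 8, and |Λ \ H| = 24 > |Δ \ H| + 6. -/
theorem stmt_16 :
    (rootsD 4 ∩ HD4).ncard = 12 ∧
    (LamD4 ∩ HD4).ncard = 8 ∧
    (LamD4 \ HD4).ncard = 24 ∧
    (rootsD 4 \ HD4).ncard + 6 < (LamD4 \ HD4).ncard := by
  rw [rootsD_eq, LamD4_eq, interH_eq, interH_eq, diffH_eq, diffH_eq,
    ncard_c2, ncard_c2, ncard_c2, ncard_c2, cardFL0, cardFL1, cardFR0, cardFR1]
  norm_num

end
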